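/- Let b > 0 be a real number algebraic over ℚ such that no complex root of its minimal polynomial p over ℚ has modulus greater than b, and suppose η ∈ ℂ with |η| = 1 is such that bη is also a root of p (viewed over ℂ). Then η is a root of unity, i.e. η^k = 1 for some integer k ≥ 1. -/

import Mathlib

open Polynomial IntermediateField

set_option maxHeartbeats 1000000 in
theorem unit_modulus_factor_of_root_is_root_of_unity
    (b : ℝ) (hb : 0 < b) (halg : IsAlgebraic ℚ b)
    (hroots : ∀ z ∈ (minpoly ℚ b).rootSet ℂ, ‖z‖ ≤ b)
    (η : ℂ) (hη : ‖η‖ = 1)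
    (hroot : (b : ℂ) * η ∈ (minpoly ℚ b).rootSet ℂ) :
    ∃ k : ℕ, 1 ≤ k ∧ η ^ k = 1 := by
  classical
  set p := minpoly ℚ b with hpdef
  have hbint : IsIntegral ℚ b := halg.isIntegral
  have hp0 : p ≠ 0 := minpoly.ne_zero hbint
  have hbC0 : (b : ℂ) ≠ 0 := by simpa using hb.ne'
  have hη0 : η ≠ 0 := fun h => by simp [h] at hη
  -- b itself is a root in ℂ
  have hbroot : (b : ℂ) ∈ p.rootSet ℂ := by
    rw [Polynomial.mem_rootSet]
    refine ⟨hp0, ?_⟩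
    have h : (b : ℂ) = algebraMap ℝ ℂ b := rfl
    rw [h, Polynomial.aeval_algebraMap_apply, minpoly.aeval, map_zero]
  -- rootSet is closed under complex conjugation
  have hconjroot : ∀ z ∈ p.rootSet ℂ, (starRingEnd ℂ) z ∈ p.rootSet ℂ := by
    intro z hz
    rw [Polynomial.mem_rootSet] at hz ⊢
    refine ⟨hp0, ?_⟩
    have h : (starRingEnd ℂ) z = (Complex.conjAe.restrictScalars ℚ) z := rfl
    rw [h, Polynomial.aeval_algHom_apply, hz.2, map_zero]
  -- the splitting field K inside ℂ
  let K := IntermediateField.adjoin ℚ (p.rootSet ℂ)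
  haveI hsf : p.IsSplittingField ℚ K :=
    adjoin_rootSet_isSplittingField (IsAlgClosed.splits (p.map (algebraMap ℚ ℂ)))
  haveI : Normal ℚ K := Normal.of_isSplittingField p
  have hmem : ∀ z ∈ p.rootSet ℂ, z ∈ K := fun z hz => subset_adjoin ℚ _ hz
  obtain ⟨bK, hbKval⟩ : ∃ x : K, (x : ℂ) = (b : ℂ) := ⟨⟨(b:ℂ), hmem _ hbroot⟩, rfl⟩
  obtain ⟨βK, hβKval⟩ : ∃ x : K, (x : ℂ) = (b : ℂ) * η := ⟨⟨(b:ℂ) * η, hmem _ hroot⟩, rfl⟩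
  have hbK0 : bK ≠ 0 := by
    intro h
    rw [h] at hbKval
    exact hbC0 (by rw [← hbKval]; simp)
  obtain ⟨ηK, hηKval, hβK⟩ : ∃ x : K, (x : ℂ) = η ∧ βK = bK * x := by
    refine ⟨bK⁻¹ * βK, ?_, ?_⟩
    · rw [MulMemClass.coe_mul, IntermediateField.coe_inv, hbKval, hβKval]
      field_simp
    · rw [← mul_assoc, mul_inv_cancel₀ hbK0, one_mul]
  have hηK0 : ηK ≠ 0 := by
    intro h
    rw [h] at hηKval
    exact hη0 (by rw [← hηKval]; simp)
  -- transfer of root conditions between K and ℂ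
  have hval : ∀ x : K, ((Polynomial.aeval x p : K) : ℂ) = Polynomial.aeval (x : ℂ) p :=
    fun x => (Polynomial.aeval_algHom_apply K.val x p).symm
  have hvaliff : ∀ x : K, Polynomial.aeval x p = 0 ↔ (x : ℂ) ∈ p.rootSet ℂ := by
    intro x
    rw [Polynomial.mem_rootSet, ← hval]
    constructor
    · intro h; exact ⟨hp0, by rw [h]; simp⟩
    · intro h; exact Subtype.coe_injective (by simpa using h.2)
  -- the automorphism σ with σ bK = βK
  have hminbK : minpoly ℚ bK = p := by
    have e1 : minpoly ℚ bK = minpoly ℚ ((bK : K) : ℂ) :=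
      (minpoly.algebraMap_eq (algebraMap K ℂ).injective bK).symm
    have e0 : ((bK : K) : ℂ) = algebraMap ℝ ℂ b := hbKval
    rw [e1, e0, minpoly.algebraMap_eq Complex.ofReal_injective b]
  have hminβK : minpoly ℚ βK = p := by
    have hirr : Irreducible p := minpoly.irreducible hbint
    have hmon : p.Monic := minpoly.monic hbint
    refine (minpoly.eq_of_irreducible_of_monic hirr ?_ hmon).symm
    rw [hvaliff, hβKval]
    exact hroot
  obtain ⟨σ, hσ⟩ : ∃ σ : K ≃ₐ[ℚ] K, σ bK = βK :=
    IsConjRoot.exists_algEquiv (show IsConjRoot ℚ βK bK from hminβK.trans hminbK.symm)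
  -- the set U of unit-modulus ratios of maximal roots
  set U : Set K := {u | ‖(u : ℂ)‖ = 1 ∧ Polynomial.aeval (bK * u) p = 0} with hUdef
  have hUfin : U.Finite := by
    have hW : ({x : K | Polynomial.aeval x p = 0}).Finite := by
      have hsub : {x : K | Polynomial.aeval x p = 0} ⊆
          (fun x : K => (x : ℂ)) ⁻¹' (p.rootSet ℂ) := fun x hx => (hvaliff x).1 hx
      exact Set.Finite.subset (Set.Finite.preimage (Subtype.coe_injective.injOn)
        (p.rootSet_finite ℂ)) hsub
    have hsub2 : U ⊆ (fun x : K => bK⁻¹ * x) '' {x : K | Polynomial.aeval x p = 0} :=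
      fun u hu => ⟨bK * u, hu.2, by
        show bK⁻¹ * (bK * u) = u
        rw [← mul_assoc, inv_mul_cancel₀ hbK0, one_mul]⟩
    exact Set.Finite.subset (Set.Finite.image _ hW) hsub2
  set s : Finset K := hUfin.toFinset with hsdef
  have hsmem : ∀ u : K, u ∈ s ↔ u ∈ U := fun u => Set.Finite.mem_toFinset hUfin
  have h1U : (1 : K) ∈ U := by
    refine ⟨by simp, ?_⟩
    rw [mul_one, hvaliff, hbKval]
    exact hbroot
  have hsne : s.Nonempty := ⟨1, (hsmem 1).2 h1U⟩
  -- conjugation pairing inside U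
  have hUconj : ∀ u ∈ U, ∃ u' ∈ U, u * u' = 1 ∧ ((u' : K) : ℂ) = (starRingEnd ℂ) (u : ℂ) := by
    intro u hu
    have hbu : ((bK * u : K) : ℂ) ∈ p.rootSet ℂ := (hvaliff _).1 hu.2
    have hc : (starRingEnd ℂ) ((bK * u : K) : ℂ) ∈ p.rootSet ℂ := hconjroot _ hbu
    obtain ⟨w, hwval⟩ : ∃ x : K, (x : ℂ) = (starRingEnd ℂ) ((bK * u : K) : ℂ) :=
      ⟨⟨_, hmem _ hc⟩, rfl⟩
    have hu'val : ((bK⁻¹ * w : K) : ℂ) = (starRingEnd ℂ) (u : ℂ) := by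
      rw [MulMemClass.coe_mul, IntermediateField.coe_inv, hwval, MulMemClass.coe_mul,
        map_mul, hbKval, Complex.conj_ofReal]
      exact inv_mul_cancel_left₀ hbC0 _
    refine ⟨bK⁻¹ * w, ⟨?_, ?_⟩, ?_, hu'val⟩
    · rw [hu'val, Complex.norm_conj, hu.1]
    · rw [hvaliff]
      have e : bK * (bK⁻¹ * w) = w := mul_inv_cancel_left₀ hbK0 w
      rw [e, hwval]
      exact hc
    · apply Subtype.coe_injective
      show ((u * (bK⁻¹ * w) : K) : ℂ) = ((1 : K) : ℂ)
      rw [MulMemClass.coe_mul, hu'val, Complex.mul_conj, Complex.normSq_eq_norm_sq, hu.1]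
      simp
  -- σ maps roots to roots
  have hσroot : ∀ x : K, Polynomial.aeval x p = 0 → Polynomial.aeval (σ x) p = 0 := by
    intro x hx
    rw [Polynomial.aeval_algHom_apply σ x p, hx, map_zero]
  -- |σ u| ≤ 1 for u ∈ U
  have hbabs : ‖((b : ℝ) : ℂ)‖ = b := by
    rw [Complex.norm_real, Real.norm_eq_abs, abs_of_pos hb]
  have hσle : ∀ u ∈ U, ‖((σ u : K) : ℂ)‖ ≤ 1 := by
    intro u hu
    have h1 : Polynomial.aeval (σ (bK * u)) p = 0 := hσroot _ hu.2
    have h2 : ‖((σ (bK * u) : K) : ℂ)‖ ≤ b := hroots _ ((hvaliff _).1 h1)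
    have e : σ (bK * u) = bK * (ηK * σ u) := by
      rw [map_mul, hσ, hβK, mul_assoc]
    rw [e, MulMemClass.coe_mul, MulMemClass.coe_mul, norm_mul, norm_mul, hbKval, hbabs,
      hηKval, hη, one_mul] at h2
    nlinarith [norm_nonneg ((σ u : K) : ℂ)]
  -- |σ u| = 1 for u ∈ U
  have hσabs : ∀ u ∈ U, ‖((σ u : K) : ℂ)‖ = 1 := by
    intro u hu
    obtain ⟨u', hu', hmul, _⟩ := hUconj u hu
    have e : σ u * σ u' = 1 := by rw [← map_mul, hmul, map_one]
    have eabs : ‖((σ u : K) : ℂ)‖ * ‖((σ u' : K) : ℂ)‖ = 1 := by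
      rw [← norm_mul, ← MulMemClass.coe_mul, e]
      simp
    have l1 := hσle u hu
    have l2 := hσle u' hu'
    nlinarith [norm_nonneg ((σ u : K) : ℂ),
      norm_nonneg ((σ u' : K) : ℂ)]
  -- U is stable under u ↦ ηK * σ u
  have hmaps : ∀ u ∈ U, ηK * σ u ∈ U := by
    intro u hu
    refine ⟨?_, ?_⟩
    · rw [MulMemClass.coe_mul, norm_mul, hηKval, hη, one_mul]
      exact hσabs u hu
    · have e : σ (bK * u) = bK * (ηK * σ u) := by
        rw [map_mul, hσ, hβK, mul_assoc]
      rw [← e]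
      exact hσroot _ hu.2
  -- the product Pr over U
  set Pr : K := ∏ u ∈ s, u with hPrdef
  have hPrval : ((Pr : K) : ℂ) = ∏ u ∈ s, ((u : K) : ℂ) := by
    rw [hPrdef]
    exact map_prod K.val _ _
  have hPrabs : ‖((Pr : K) : ℂ)‖ = 1 := by
    rw [hPrval, Complex.norm_prod]
    rw [Finset.prod_congr rfl (fun u hu => ((hsmem u).1 hu).1)]
    simp
  have hPr0 : Pr ≠ 0 := by
    intro h
    rw [h] at hPrabs
    simp at hPrabs
  -- key identity : ηK ^ card * σ Pr = Pr
  have hinj : Function.Injective (fun u : K => ηK * σ u) := by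
    intro a c h
    simp only at h
    exact σ.injective (mul_left_cancel₀ hηK0 h)
  have himg : s.image (fun u : K => ηK * σ u) = s := by
    apply Finset.eq_of_subset_of_card_le
    · intro x hx
      obtain ⟨u, hu, rfl⟩ := Finset.mem_image.1 hx
      exact (hsmem _).2 (hmaps u ((hsmem u).1 hu))
    · rw [Finset.card_image_of_injective _ hinj]
  have key : ηK ^ s.card * σ Pr = Pr := by
    conv_rhs => rw [hPrdef, ← himg, Finset.prod_image (fun a _ c _ h => hinj h)]
    rw [Finset.prod_mul_distrib, Finset.prod_const, hPrdef, map_prod σ]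
  -- Pr is real, hence ±1, hence fixed by σ
  have hconjPr : (starRingEnd ℂ) ((Pr : K) : ℂ) = ((Pr : K) : ℂ) := by
    set t : Finset ℂ := s.image (fun u : K => ((u : K) : ℂ)) with htdef
    have htprod : ∏ z ∈ t, z = ((Pr : K) : ℂ) := by
      rw [htdef, Finset.prod_image (fun a _ c _ h => Subtype.coe_injective h), hPrval]
    have himgt : t.image (starRingEnd ℂ) = t := by
      apply Finset.eq_of_subset_of_card_le
      · intro z hz
        obtain ⟨y, hy, rfl⟩ := Finset.mem_image.1 hz
        obtain ⟨u, hu, rfl⟩ := Finset.mem_image.1 hy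
        obtain ⟨u', hu', _, hval'⟩ := hUconj u ((hsmem u).1 hu)
        rw [htdef]
        apply Finset.mem_image.2
        exact ⟨u', (hsmem u').2 hu', hval'⟩
      · rw [Finset.card_image_of_injective _ (starRingEnd ℂ).injective]
    calc (starRingEnd ℂ) ((Pr : K) : ℂ) = ∏ z ∈ t, (starRingEnd ℂ) z := by
          rw [← htprod, map_prod]
      _ = ∏ z ∈ t.image (starRingEnd ℂ), z := by
          rw [Finset.prod_image (fun a _ c _ h => (starRingEnd ℂ).injective h)]
      _ = ((Pr : K) : ℂ) := by rw [himgt, htprod]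
  have hPrpm : Pr = 1 ∨ Pr = -1 := by
    have hre : (((Pr : K) : ℂ).re : ℂ) = ((Pr : K) : ℂ) := Complex.conj_eq_iff_re.1 hconjPr
    have habs : |((Pr : K) : ℂ).re| = 1 := by
      have h := hPrabs
      rw [← hre, Complex.norm_real, Real.norm_eq_abs] at h
      exact h
    rcases (abs_eq (by norm_num : (0:ℝ) ≤ 1)).1 habs with h | h
    · left
      apply Subtype.coe_injective
      show ((Pr : K) : ℂ) = ((1 : K) : ℂ)
      rw [← hre, h]
      simp
    · right
      apply Subtype.coe_injective
      show ((Pr : K) : ℂ) = ((-1 : K) : ℂ)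
      rw [← hre, h]
      push_cast
      simp
  have hσPr : σ Pr = Pr := by
    rcases hPrpm with h | h <;> rw [h] <;> simp
  have hfin : ηK ^ s.card = 1 := by
    have h := key
    rw [hσPr] at h
    exact mul_right_cancel₀ hPr0 (by rw [h, one_mul])
  refine ⟨s.card, Finset.card_pos.2 hsne, ?_⟩
  have e : ((ηK ^ s.card : K) : ℂ) = η ^ s.card := by
    push_cast [hηKval]
    ring
  rw [← e, hfin]
  simp
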